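/- Let x, y ∈ [0,1] and let z be a real number with max(x + y − 1, 0) ≤ z ≤ min(x, y). Then z = min(x, y), or z = max(x + y − 1, 0), or z = x·y, or there exists λ ∈ (0,∞) with λ ≠ 1 such that z = log_λ(1 + (λ^x − 1)(λ^y − 1)/(λ − 1)). -/

import Mathlib

open Real Filter Set Topology

private lemma slope_tendsto_frank (p : ℝ) :
    Tendsto (fun l : ℝ => (l ^ p - 1) / (l - 1)) (𝓝[≠] (1:ℝ)) (𝓝 p) := by
  have h := Real.hasDerivAt_rpow_const (x := (1:ℝ)) (p := p) (Or.inl one_ne_zero)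
  rw [hasDerivAt_iff_tendsto_slope] at h
  have hp : p * (1:ℝ) ^ (p - 1) = p := by simp
  rw [hp] at h
  have : (slope (fun x : ℝ => x ^ p) 1) = fun l : ℝ => (l ^ p - 1) / (l - 1) := by
    funext l
    rw [slope_def_field]
    simp [Real.one_rpow]
  rwa [this] at h

private lemma frank_H_cont (x y z : ℝ) {l : ℝ} (hl : l ≠ 0) :
    ContinuousAt (fun l : ℝ => (l ^ x - 1) * (l ^ y - 1) - (l ^ z - 1) * (l - 1)) l := by
  have hx := Real.continuousAt_rpow_const l x (Or.inl hl)
  have hy := Real.continuousAt_rpow_const l y (Or.inl hl)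
  have hz := Real.continuousAt_rpow_const l z (Or.inl hl)
  exact ((hx.sub continuousAt_const).mul (hy.sub continuousAt_const)).sub
    ((hz.sub continuousAt_const).mul (continuousAt_id.sub continuousAt_const))

private lemma frank_near_one (x y z : ℝ) :
    Tendsto (fun l : ℝ => ((l ^ x - 1) * (l ^ y - 1) - (l ^ z - 1) * (l - 1)) / (l - 1) ^ 2)
      (𝓝[≠] (1:ℝ)) (𝓝 (x * y - z)) := by
  have h := ((slope_tendsto_frank x).mul (slope_tendsto_frank y)).sub (slope_tendsto_frank z)
  refine h.congr' ?_
  filter_upwards [self_mem_nhdsWithin] with l hl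
  have h1 : l - 1 ≠ 0 := sub_ne_zero.mpr hl
  field_simp

private lemma frank_root_gt_one (x y z : ℝ) (hx1 : x ≤ 1) (hy1 : y ≤ 1) (hz0 : 0 < z)
    (hlow : x + y - 1 < z) (hhigh : z < x * y) :
    ∃ c : ℝ, 1 < c ∧ (c ^ x - 1) * (c ^ y - 1) = (c ^ z - 1) * (c - 1) := by
  set H : ℝ → ℝ := fun l => (l ^ x - 1) * (l ^ y - 1) - (l ^ z - 1) * (l - 1) with hH
  -- positivity near 1 (from the right)
  have h1 : Tendsto (fun l : ℝ => H l / (l - 1) ^ 2) (𝓝[>] (1:ℝ)) (𝓝 (x * y - z)) :=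
    (frank_near_one x y z).mono_left (nhdsWithin_mono _ (fun l hl => ne_of_gt hl))
  have hpos : ∀ᶠ l in 𝓝[>] (1:ℝ), 0 < H l := by
    filter_upwards [h1.eventually (eventually_gt_nhds (by linarith : (0:ℝ) < x * y - z)),
      self_mem_nhdsWithin] with l hql hl
    have h2 : (0:ℝ) < (l - 1) ^ 2 := pow_pos (sub_pos.mpr hl) 2
    have h3 := mul_pos hql h2
    rwa [div_mul_cancel₀ _ (ne_of_gt h2)] at h3
  obtain ⟨a, haH, ha⟩ := (hpos.and self_mem_nhdsWithin).exists
  -- negativity at infinity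
  have tneg : ∀ b : ℝ, b < 0 → Tendsto (fun l : ℝ => l ^ b) atTop (𝓝 0) := by
    intro b hb
    simpa using tendsto_rpow_neg_atTop (neg_pos.mpr hb)
  have h2 : Tendsto (fun l : ℝ => H l / l ^ (z + 1)) atTop (𝓝 (-1)) := by
    have key : ∀ l : ℝ, 0 < l → H l / l ^ (z + 1) =
        l ^ (x + y - (z + 1)) - l ^ (x - (z + 1)) - l ^ (y - (z + 1)) - 1
          + l ^ (-z) + l ^ (-1 : ℝ) := by
      intro l hl
      have hne : l ^ (z + 1) ≠ 0 := (Real.rpow_pos_of_pos hl _).ne'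
      rw [div_eq_iff hne]
      have e : ∀ a : ℝ, l ^ (a - (z + 1)) * l ^ (z + 1) = l ^ a := by
        intro a; rw [← Real.rpow_add hl]; ring_nf
      have e1 := e (x + y); have e2 := e x; have e3 := e y
      have e4 : l ^ (-z : ℝ) * l ^ (z + 1) = l := by
        rw [← Real.rpow_add hl]; norm_num
      have e5 : l ^ (-1 : ℝ) * l ^ (z + 1) = l ^ z := by
        rw [← Real.rpow_add hl]; ring_nf
      have e6 : l ^ (x + y) = l ^ x * l ^ y := Real.rpow_add hl x y
      have e7 : l ^ (z + 1) = l ^ z * l := by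
        rw [Real.rpow_add hl, Real.rpow_one]
      simp only [hH]
      nlinarith [e1, e2, e3, e4, e5, e6, e7]
    have hlim : Tendsto (fun l : ℝ => l ^ (x + y - (z + 1)) - l ^ (x - (z + 1))
        - l ^ (y - (z + 1)) - 1 + l ^ (-z) + l ^ (-1 : ℝ)) atTop (𝓝 (-1)) := by
      have := (((((tneg _ (by linarith : x + y - (z + 1) < 0)).sub
        (tneg _ (by linarith : x - (z + 1) < 0))).sub
        (tneg _ (by linarith : y - (z + 1) < 0))).sub
        (tendsto_const_nhds (x := (1:ℝ)))).add
        (tneg _ (by linarith : -z < 0))).add (tneg _ (by norm_num : (-1:ℝ) < 0))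
      simpa using this
    refine hlim.congr' ?_
    filter_upwards [eventually_gt_atTop (0:ℝ)] with l hl
    exact (key l hl).symm
  have hneg : ∀ᶠ l in atTop, H l < 0 := by
    filter_upwards [h2.eventually (eventually_lt_nhds (by norm_num : (-1:ℝ) < -1/2)),
      eventually_gt_atTop (0:ℝ)] with l hql hl
    have hp : (0:ℝ) < l ^ (z + 1) := Real.rpow_pos_of_pos hl _
    have h3 := mul_lt_mul_of_pos_right hql hp
    rw [div_mul_cancel₀ _ (ne_of_gt hp)] at h3
    exact lt_trans h3 (mul_neg_of_neg_of_pos (by norm_num : (-1/2:ℝ) < 0) hp)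
  obtain ⟨b, hb⟩ := (hneg.and (eventually_ge_atTop a)).exists
  -- IVT
  have hcont : ContinuousOn H (Icc a b) := by
    intro l hl
    exact (frank_H_cont x y z (by nlinarith [hl.1, ha] : l ≠ 0)).continuousWithinAt
  have := intermediate_value_Icc' hb.2 hcont
  have h0 : (0:ℝ) ∈ Icc (H b) (H a) := ⟨hb.1.le, haH.le⟩
  obtain ⟨c, hc, hHc⟩ := this h0
  exact ⟨c, lt_of_lt_of_le ha hc.1, by simpa [hH, sub_eq_zero] using hHc⟩

private lemma frank_root_lt_one (x y z : ℝ) (hzx : z < x) (hzy : z < y) (hz1 : z < 1)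
    (hz0 : 0 < z) (hhigh : x * y < z) :
    ∃ c : ℝ, 0 < c ∧ c < 1 ∧ (c ^ x - 1) * (c ^ y - 1) = (c ^ z - 1) * (c - 1) := by
  set H : ℝ → ℝ := fun l => (l ^ x - 1) * (l ^ y - 1) - (l ^ z - 1) * (l - 1) with hH
  -- negativity near 1 (from the left)
  have h1 : Tendsto (fun l : ℝ => H l / (l - 1) ^ 2) (𝓝[<] (1:ℝ)) (𝓝 (x * y - z)) :=
    (frank_near_one x y z).mono_left (nhdsWithin_mono _ (fun l hl => ne_of_lt hl))
  have hneg : ∀ᶠ l in 𝓝[<] (1:ℝ), H l < 0 := by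
    filter_upwards [h1.eventually (eventually_lt_nhds (by linarith : x * y - z < 0)),
      self_mem_nhdsWithin] with l hql hl
    have hne1 : l - 1 ≠ 0 := sub_ne_zero.mpr (ne_of_lt hl)
    have h2 : (0:ℝ) < (l - 1) ^ 2 := by positivity
    have h3 := mul_neg_of_neg_of_pos hql h2
    rwa [div_mul_cancel₀ _ (ne_of_gt h2)] at h3
  have hIoo : Ioo (0:ℝ) 1 ∈ 𝓝[<] (1:ℝ) :=
    Ioo_mem_nhdsLT_of_mem (⟨by norm_num, le_refl 1⟩ : (1:ℝ) ∈ Ioc (0:ℝ) 1)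
  obtain ⟨b, hbH, hb0, hb1⟩ := (hneg.and hIoo).exists
  -- positivity near 0
  have t0 : ∀ a : ℝ, 0 < a → Tendsto (fun l : ℝ => l ^ a) (𝓝[>] (0:ℝ)) (𝓝 0) := by
    intro a haa
    have h := (Real.continuousAt_rpow_const 0 a (Or.inr haa.le)).tendsto
    rw [Real.zero_rpow haa.ne'] at h
    exact h.mono_left nhdsWithin_le_nhds
  have h2 : Tendsto (fun l : ℝ => H l / l ^ z) (𝓝[>] (0:ℝ)) (𝓝 1) := by
    have key : ∀ l : ℝ, 0 < l → H l / l ^ z =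
        l ^ (x + y - z) - l ^ (x - z) - l ^ (y - z) - l + 1 + l ^ (1 - z) := by
      intro l hl
      have hne : l ^ z ≠ 0 := (Real.rpow_pos_of_pos hl _).ne'
      rw [div_eq_iff hne]
      have e : ∀ a : ℝ, l ^ (a - z) * l ^ z = l ^ a := by
        intro a; rw [← Real.rpow_add hl]; ring_nf
      have e1 := e (x + y); have e2 := e x; have e3 := e y
      have e5 : l ^ (1 - z) * l ^ z = l := by
        rw [← Real.rpow_add hl]; norm_num
      have e6 : l ^ (x + y) = l ^ x * l ^ y := Real.rpow_add hl x y
      simp only [hH]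
      nlinarith [e1, e2, e3, e5, e6]
    have hlim : Tendsto (fun l : ℝ => l ^ (x + y - z) - l ^ (x - z) - l ^ (y - z)
        - l + 1 + l ^ (1 - z)) (𝓝[>] (0:ℝ)) (𝓝 1) := by
      have hid : Tendsto (fun l : ℝ => l) (𝓝[>] (0:ℝ)) (𝓝 0) :=
        tendsto_id.mono_left nhdsWithin_le_nhds
      have := (((((t0 _ (by nlinarith : (0:ℝ) < x + y - z)).sub
        (t0 _ (by linarith : (0:ℝ) < x - z))).sub
        (t0 _ (by linarith : (0:ℝ) < y - z))).sub hid).add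
        (tendsto_const_nhds (x := (1:ℝ)))).add (t0 _ (by linarith : (0:ℝ) < 1 - z))
      simpa using this
    refine hlim.congr' ?_
    filter_upwards [self_mem_nhdsWithin] with l hl
    exact (key l hl).symm
  have hpos : ∀ᶠ l in 𝓝[>] (0:ℝ), 0 < H l := by
    filter_upwards [h2.eventually (eventually_gt_nhds (by norm_num : (1/2:ℝ) < 1)),
      self_mem_nhdsWithin] with l hql hl
    have hp : (0:ℝ) < l ^ z := Real.rpow_pos_of_pos hl _
    have h3 := mul_lt_mul_of_pos_right hql hp
    rw [div_mul_cancel₀ _ (ne_of_gt hp)] at h3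
    exact lt_trans (mul_pos (by norm_num : (0:ℝ) < 1/2) hp) h3
  have hIb : Iio b ∈ 𝓝[>] (0:ℝ) :=
    nhdsWithin_le_nhds (Iio_mem_nhds hb0)
  have hb' : ∀ᶠ l in 𝓝[>] (0:ℝ), l < b := by
    filter_upwards [hIb] with l hl
    exact hl
  obtain ⟨a, ⟨haH, hab⟩, ha0⟩ := ((hpos.and hb').and self_mem_nhdsWithin).exists
  -- IVT on [a, b]
  have hcont : ContinuousOn H (Icc a b) := by
    intro l hl
    exact (frank_H_cont x y z (by nlinarith [hl.1, ha0] : l ≠ 0)).continuousWithinAt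
  have := intermediate_value_Icc' (le_of_lt hab) hcont
  have h0 : (0:ℝ) ∈ Icc (H b) (H a) := ⟨hbH.le, haH.le⟩
  obtain ⟨c, hc, hHc⟩ := this h0
  refine ⟨c, lt_of_lt_of_le ha0 hc.1, lt_of_le_of_lt hc.2 hb1,
    by simpa [hH, sub_eq_zero] using hHc⟩

private lemma frank_of_root (x y z c : ℝ) (hc : 0 < c) (hc1 : c ≠ 1)
    (h : (c ^ x - 1) * (c ^ y - 1) = (c ^ z - 1) * (c - 1)) :
    z = Real.logb c (1 + (c ^ x - 1) * (c ^ y - 1) / (c - 1)) := by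
  have hne : c - 1 ≠ 0 := sub_ne_zero.mpr hc1
  have harg : 1 + (c ^ x - 1) * (c ^ y - 1) / (c - 1) = c ^ z := by
    rw [h, mul_div_cancel_right₀ _ hne]; ring
  rw [harg, Real.logb_rpow hc hc1]

theorem coherent_extension_is_frank_tnorm (x y z : ℝ)
    (hx : x ∈ Set.Icc (0 : ℝ) 1) (hy : y ∈ Set.Icc (0 : ℝ) 1)
    (hz1 : max (x + y - 1) 0 ≤ z) (hz2 : z ≤ min x y) :
    z = min x y ∨ z = max (x + y - 1) 0 ∨ z = x * y ∨
      ∃ l : ℝ, 0 < l ∧ l ≠ 1 ∧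
        z = Real.logb l (1 + (l ^ x - 1) * (l ^ y - 1) / (l - 1)) := by
  by_cases h1 : z = min x y
  · exact Or.inl h1
  by_cases h2 : z = max (x + y - 1) 0
  · exact Or.inr (Or.inl h2)
  by_cases h3 : z = x * y
  · exact Or.inr (Or.inr (Or.inl h3))
  refine Or.inr (Or.inr (Or.inr ?_))
  have hmax : max (x + y - 1) 0 < z := lt_of_le_of_ne hz1 (Ne.symm h2)
  have hmin : z < min x y := lt_of_le_of_ne hz2 h1
  have hz0 : 0 < z := lt_of_le_of_lt (le_max_right _ _) hmax
  have hlow : x + y - 1 < z := lt_of_le_of_lt (le_max_left _ _) hmax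
  have hzx : z < x := lt_of_lt_of_le hmin (min_le_left _ _)
  have hzy : z < y := lt_of_lt_of_le hmin (min_le_right _ _)
  rcases lt_or_gt_of_ne h3 with hlt | hgt
  · -- z < x*y : root with c > 1
    obtain ⟨c, hc1, hc⟩ := frank_root_gt_one x y z hx.2 hy.2 hz0 hlow hlt
    exact ⟨c, by linarith, ne_of_gt hc1, frank_of_root x y z c (by linarith) (ne_of_gt hc1) hc⟩
  · -- x*y < z : root with 0 < c < 1
    obtain ⟨c, hc0, hc1, hc⟩ := frank_root_lt_one x y z hzx hzy
      (lt_of_lt_of_le hzx hx.2) hz0 hgt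
    exact ⟨c, hc0, ne_of_lt hc1, frank_of_root x y z c hc0 (ne_of_lt hc1) hc⟩
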